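/- Define Φ_{σ,τ}(F) = (d ↦ addcost_τ(1, F(d))) if F is strongly monotonic, and Φ_{σ,τ}(F) = (d ↦ addcost_τ(cost_σ(d)+1, F(d))) if F is constant. Then Φ_{σ,τ} maps every such F to a strongly monotonic function from the interpretation of σ to that of τ, and Φ_{σ,τ} is itself strongly monotonic with respect to pointwise comparison: if F(x) ⊐ G(x) for all x then Φ(F)(x) ⊐ Φ(G)(x) for all x, and similarly for ⊒. -/

import Mathlib

/-- Simple types over a set of sorts `S`. -/
inductive Ty (S : Type) : Type where
  | base : S → Ty S
  | arrow : Ty S → Ty S → Ty S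

/-- The interpretation of types: a base sort `ι` is interpreted as the set of
tuples `ℕ^{K ι + 1}` (so tuples always have length ≥ 1), and an arrow type as
the full function space (membership in the strongly monotonic functionals is
the predicate `Mem` below). -/
def Interp {S : Type} (K : S → ℕ) : Ty S → Type
  | .base ι => Fin (K ι + 1) → ℕ
  | .arrow σ τ => Interp K σ → Interp K τ

mutual
/-- Membership in the set of strongly monotonic functionals of type `σ`. -/
def Mem {S : Type} (K : S → ℕ) : (σ : Ty S) → Interp K σ → Prop
  | .base _, _ => True
  | .arrow σ τ, F =>
      (∀ x, Mem K σ x → Mem K τ (F x)) ∧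
      (∀ x y, Mem K σ x → Mem K σ y → TGt K σ x y → TGt K τ (F x) (F y)) ∧
      (∀ x y, Mem K σ x → Mem K σ y → TGe K σ x y → TGe K τ (F x) (F y))

/-- The hereditary strict order `⊐` on the interpretation of a type. -/
def TGt {S : Type} (K : S → ℕ) : (σ : Ty S) → Interp K σ → Interp K σ → Prop
  | .base _, x, y => (∀ i, y i ≤ x i) ∧ y 0 < x 0
  | .arrow σ τ, F, G => (∃ x, Mem K σ x) ∧ ∀ x, Mem K σ x → TGt K τ (F x) (G x)

/-- The hereditary weak order `⊒` on the interpretation of a type. -/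
def TGe {S : Type} (K : S → ℕ) : (σ : Ty S) → Interp K σ → Interp K σ → Prop
  | .base _, x, y => ∀ i, y i ≤ x i
  | .arrow σ τ, F, G => ∀ x, Mem K σ x → TGe K τ (F x) (G x)
end

/-- `addcost σ c x` hereditarily adds `c` to the cost (first) component. -/
def addcost {S : Type} (K : S → ℕ) : (σ : Ty S) → ℕ → Interp K σ → Interp K σ
  | .base _, c, x => fun i => if i = 0 then c + x i else x i
  | .arrow σ τ, c, F => fun d => addcost K τ c (F d)

mutual
/-- The hereditarily minimal element `0_σ`. -/
def nul {S : Type} (K : S → ℕ) : (σ : Ty S) → Interp K σ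
  | .base _ => fun _ => 0
  | .arrow σ τ => fun d => addcost K τ (cost K σ d) (nul K τ)

/-- The hereditary cost extraction `cost_σ`. -/
def cost {S : Type} (K : S → ℕ) : (σ : Ty S) → Interp K σ → ℕ
  | .base _, x => x 0
  | .arrow σ τ, F => cost K τ (F (nul K σ))
end

/-- `F` is a constant function from the interpretation of `σ` into the
interpretation of `τ`. -/
def IsConst {S : Type} (K : S → ℕ) (σ τ : Ty S)
    (F : Interp K σ → Interp K τ) : Prop :=
  (∀ x, Mem K σ x → Mem K τ (F x)) ∧
  (∀ x y, Mem K σ x → Mem K σ y → F x = F y)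

open Classical in
/-- The monotonicity function `Φ_{σ,τ}`: if `F` is strongly monotonic it adds
`1` to the cost, otherwise it adds `cost σ d + 1`. -/
noncomputable def Phi {S : Type} (K : S → ℕ) (σ τ : Ty S)
    (F : Interp K σ → Interp K τ) : Interp K σ → Interp K τ :=
  if Mem K (Ty.arrow σ τ) F then fun d => addcost K τ 1 (F d)
  else fun d => addcost K τ (cost K σ d + 1) (F d)

lemma addcost_base_zero {S : Type} (K : S → ℕ) (ι : S) (c : ℕ)
    (x : Interp K (Ty.base ι)) : addcost K (Ty.base ι) c x 0 = c + x 0 := by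
  show (if (0 : Fin (K ι + 1)) = 0 then c + x 0 else x 0) = c + x 0
  exact if_pos rfl

lemma addcost_base_apply {S : Type} (K : S → ℕ) (ι : S) (c : ℕ)
    (x : Interp K (Ty.base ι)) (i : Fin (K ι + 1)) (hi : i ≠ 0) :
    addcost K (Ty.base ι) c x i = x i := by
  show (if i = 0 then c + x i else x i) = x i
  exact if_neg hi

lemma addcost_zero {S : Type} (K : S → ℕ) : ∀ (σ : Ty S) (x : Interp K σ),
    addcost K σ 0 x = x := by
  intro σ
  induction σ with
  | base ι => intro x; funext i; simp [addcost]
  | arrow σ τ ihσ ihτ => intro F; funext d; exact ihτ (F d)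

lemma addcost_add {S : Type} (K : S → ℕ) : ∀ (σ : Ty S) (a b : ℕ) (x : Interp K σ),
    addcost K σ a (addcost K σ b x) = addcost K σ (a + b) x := by
  intro σ
  induction σ with
  | base ι =>
    intro a b x; funext i; simp only [addcost]
    by_cases h : i = 0 <;> simp [h] <;> omega
  | arrow σ τ ihσ ihτ => intro a b F; funext d; exact ihτ a b (F d)

lemma cost_addcost {S : Type} (K : S → ℕ) : ∀ (σ : Ty S) (c : ℕ) (x : Interp K σ),
    cost K σ (addcost K σ c x) = c + cost K σ x := by
  intro σ
  induction σ with
  | base ι => intro c x; simp [cost, addcost]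
  | arrow σ τ ihσ ihτ => intro c F; exact ihτ c (F (nul K σ))

lemma mega {S : Type} (K : S → ℕ) : ∀ (σ : Ty S),
    Mem K σ (nul K σ) ∧
    (∀ c x, Mem K σ x → Mem K σ (addcost K σ c x)) ∧
    (∀ x, TGe K σ x x) ∧
    (∀ x y z, TGe K σ x y → TGe K σ y z → TGe K σ x z) ∧
    (∀ x y z, TGe K σ x y → TGt K σ y z → TGt K σ x z) ∧
    (∀ x y z, TGt K σ x y → TGe K σ y z → TGt K σ x z) ∧
    (∀ c c' x y, c' ≤ c → TGe K σ x y → TGe K σ (addcost K σ c x) (addcost K σ c' y)) ∧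
    (∀ c c' x y, c' ≤ c → TGt K σ x y → TGt K σ (addcost K σ c x) (addcost K σ c' y)) ∧
    (∀ c c' x y, c' < c → TGe K σ x y → TGt K σ (addcost K σ c x) (addcost K σ c' y)) ∧
    (∀ x y, TGe K σ x y → cost K σ y ≤ cost K σ x) ∧
    (∀ x y, TGt K σ x y → cost K σ y < cost K σ x) ∧
    (∀ x y, TGt K σ x y → TGe K σ x (addcost K σ 1 y)) ∧
    (∀ c x, Mem K σ x → c ≤ cost K σ x → TGe K σ x (addcost K σ c (nul K σ))) ∧
    (∀ c x, Mem K σ x → c < cost K σ x → TGt K σ x (addcost K σ c (nul K σ))) := by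
  intro σ
  induction σ with
  | base ι =>
    refine ⟨trivial, fun _ _ _ => trivial, fun x i => le_rfl, ?_, ?_, ?_, ?_, ?_, ?_, ?_, ?_, ?_, ?_, ?_⟩
    · exact fun x y z h1 h2 i => le_trans (h2 i) (h1 i)
    · exact fun x y z h1 h2 => ⟨fun i => le_trans (h2.1 i) (h1 i), lt_of_lt_of_le h2.2 (h1 0)⟩
    · exact fun x y z h1 h2 => ⟨fun i => le_trans (h2 i) (h1.1 i), lt_of_le_of_lt (h2 0) h1.2⟩
    · intro c c' x y hc h i
      by_cases hi : i = 0
      · subst hi; rw [addcost_base_zero, addcost_base_zero]; have := h 0; omega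
      · rw [addcost_base_apply K ι c x i hi, addcost_base_apply K ι c' y i hi]; exact h i
    · intro c c' x y hc h
      refine ⟨?_, ?_⟩
      · intro i
        by_cases hi : i = 0
        · subst hi; rw [addcost_base_zero, addcost_base_zero]; have := h.1 0; omega
        · rw [addcost_base_apply K ι c x i hi, addcost_base_apply K ι c' y i hi]; exact h.1 i
      · rw [addcost_base_zero, addcost_base_zero]; have := h.2; omega
    · intro c c' x y hc h
      refine ⟨?_, ?_⟩
      · intro i
        by_cases hi : i = 0
        · subst hi; rw [addcost_base_zero, addcost_base_zero]; have := h 0; omega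
        · rw [addcost_base_apply K ι c x i hi, addcost_base_apply K ι c' y i hi]; exact h i
      · rw [addcost_base_zero, addcost_base_zero]; have := h 0; omega
    · exact fun x y h => h 0
    · exact fun x y h => h.2
    · intro x y h i
      by_cases hi : i = 0
      · subst hi; rw [addcost_base_zero]; have := h.2; omega
      · rw [addcost_base_apply K ι 1 y i hi]; exact h.1 i
    · intro c x _ hc i
      by_cases hi : i = 0
      · subst hi; rw [addcost_base_zero]
        simpa [nul, cost] using hc
      · rw [addcost_base_apply K ι c (nul K (Ty.base ι)) i hi]
        simp [nul]
    · intro c x _ hc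
      constructor
      · intro i
        by_cases hi : i = 0
        · subst hi; rw [addcost_base_zero]
          simp only [nul]
          exact le_of_lt (by simpa [cost] using hc)
        · rw [addcost_base_apply K ι c (nul K (Ty.base ι)) i hi]
          simp [nul]
      · rw [addcost_base_zero]
        simpa [nul, cost] using hc
  | arrow σ τ ihσ ihτ =>
    obtain ⟨n0σ, amσ, rflσ, trσ, trgσ, trg2σ, geσ, gtσ, gtcσ, cgeσ, cgtσ, s1σ, Bgeσ, Bgtσ⟩ := ihσ
    obtain ⟨n0τ, amτ, rflτ, trτ, trgτ, trg2τ, geτ, gtτ, gtcτ, cgeτ, cgtτ, s1τ, Bgeτ, Bgtτ⟩ := ihτ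
    -- cost superadditivity
    have hC : ∀ (F : Interp K (Ty.arrow σ τ)) (d : Interp K σ),
        Mem K (Ty.arrow σ τ) F → Mem K σ d →
        cost K τ (F (nul K σ)) + cost K σ d ≤ cost K τ (F d) := by
      intro F d hF hd
      suffices h : ∀ n d, Mem K σ d → n ≤ cost K σ d →
          cost K τ (F (nul K σ)) + n ≤ cost K τ (F d) from h _ d hd le_rfl
      intro n
      induction n with
      | zero =>
        intro d hd _
        have h1 : TGe K σ d (nul K σ) := by
          have := Bgeσ 0 d hd (Nat.zero_le _)
          rwa [addcost_zero] at this
        have := cgeτ _ _ (hF.2.2 d (nul K σ) hd n0σ h1)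
        omega
      | succ n ih =>
        intro d hd hc
        have hy : Mem K σ (addcost K σ n (nul K σ)) := amσ n _ n0σ
        have h1 : TGt K σ d (addcost K σ n (nul K σ)) := Bgtσ n d hd (by omega)
        have h2 := cgtτ _ _ (hF.2.1 d _ hd hy h1)
        have h3 := ih _ hy (by rw [cost_addcost]; omega)
        omega
    refine ⟨?_, ?_, ?_, ?_, ?_, ?_, ?_, ?_, ?_, ?_, ?_, ?_, ?_, ?_⟩
    · -- nul_mem
      refine ⟨fun x _ => amτ _ _ n0τ, ?_, ?_⟩
      · exact fun x y hx hy hxy => gtcτ _ _ _ _ (cgtσ x y hxy) (rflτ _)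
      · exact fun x y hx hy hxy => geτ _ _ _ _ (cgeσ x y hxy) (rflτ _)
    · -- addcost_mem
      intro c F hF
      exact ⟨fun x hx => amτ c _ (hF.1 x hx),
        fun x y hx hy hxy => gtτ c c _ _ le_rfl (hF.2.1 x y hx hy hxy),
        fun x y hx hy hxy => geτ c c _ _ le_rfl (hF.2.2 x y hx hy hxy)⟩
    · exact fun F x _ => rflτ (F x)
    · exact fun F G H h1 h2 x hx => trτ _ _ _ (h1 x hx) (h2 x hx)
    · exact fun F G H h1 h2 => ⟨h2.1, fun x hx => trgτ _ _ _ (h1 x hx) (h2.2 x hx)⟩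
    · exact fun F G H h1 h2 => ⟨h1.1, fun x hx => trg2τ _ _ _ (h1.2 x hx) (h2 x hx)⟩
    · exact fun c c' F G hc h x hx => geτ c c' _ _ hc (h x hx)
    · exact fun c c' F G hc h => ⟨h.1, fun x hx => gtτ c c' _ _ hc (h.2 x hx)⟩
    · exact fun c c' F G hc h => ⟨⟨nul K σ, n0σ⟩, fun x hx => gtcτ c c' _ _ hc (h x hx)⟩
    · exact fun F G h => cgeτ _ _ (h (nul K σ) n0σ)
    · exact fun F G h => cgtτ _ _ (h.2 (nul K σ) n0σ)
    · exact fun F G h x hx => s1τ _ _ (h.2 x hx)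
    · -- B_ge
      intro c F hF hc x hx
      show TGe K τ (F x) (addcost K τ c (addcost K τ (cost K σ x) (nul K τ)))
      rw [addcost_add]
      exact Bgeτ _ _ (hF.1 x hx) (le_trans (Nat.add_le_add_right hc _) (hC F x hF hx))
    · -- B_gt
      intro c F hF hc
      refine ⟨⟨nul K σ, n0σ⟩, fun x hx => ?_⟩
      show TGt K τ (F x) (addcost K τ c (addcost K τ (cost K σ x) (nul K τ)))
      rw [addcost_add]
      exact Bgtτ _ _ (hF.1 x hx) (lt_of_lt_of_le (Nat.add_lt_add_right hc _) (hC F x hF hx))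

lemma superadd {S : Type} (K : S → ℕ) (σ τ : Ty S) (F : Interp K (Ty.arrow σ τ))
    (hF : Mem K (Ty.arrow σ τ) F) :
    ∀ x, Mem K σ x → TGe K τ (F x) (addcost K τ (cost K σ x) (F (nul K σ))) := by
  obtain ⟨n0σ, amσ, rflσ, trσ, trgσ, trg2σ, geσ, gtσ, gtcσ, cgeσ, cgtσ, s1σ, Bgeσ, Bgtσ⟩ := mega K σ
  obtain ⟨n0τ, amτ, rflτ, trτ, trgτ, trg2τ, geτ, gtτ, gtcτ, cgeτ, cgtτ, s1τ, Bgeτ, Bgtτ⟩ := mega K τ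
  suffices h : ∀ n x, Mem K σ x → n ≤ cost K σ x →
      TGe K τ (F x) (addcost K τ n (F (nul K σ))) from fun x hx => h _ x hx le_rfl
  intro n
  induction n with
  | zero =>
    intro x hx _
    rw [addcost_zero]
    have h1 : TGe K σ x (nul K σ) := by
      have := Bgeσ 0 x hx (Nat.zero_le _)
      rwa [addcost_zero] at this
    exact hF.2.2 x (nul K σ) hx n0σ h1
  | succ n ih =>
    intro x hx hc
    have hy : Mem K σ (addcost K σ n (nul K σ)) := amσ n _ n0σ
    have h1 : TGt K σ x (addcost K σ n (nul K σ)) := Bgtσ n x hx (by omega)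
    have h2 : TGt K τ (F x) (F (addcost K σ n (nul K σ))) := hF.2.1 x _ hx hy h1
    have h3 : TGe K τ (F (addcost K σ n (nul K σ))) (addcost K τ n (F (nul K σ))) :=
      ih _ hy (by rw [cost_addcost]; omega)
    have h4 : TGt K τ (F x) (addcost K τ n (F (nul K σ))) := trg2τ _ _ _ h2 h3
    have h5 := s1τ _ _ h4
    rw [addcost_add] at h5
    have : 1 + n = n + 1 := by omega
    rwa [this] at h5

/-- `Φ_{σ,τ}` maps every strongly monotonic or constant function to a strongly
monotonic function, and it is itself strongly monotonic with respect to
pointwise comparison. -/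
theorem Phi_monotonicity_function {S : Type} (K : S → ℕ) (σ τ : Ty S)
    (F : Interp K σ → Interp K τ)
    (hF : Mem K (Ty.arrow σ τ) F ∨ IsConst K σ τ F) :
    Mem K (Ty.arrow σ τ) (Phi K σ τ F) ∧
    ∀ G : Interp K σ → Interp K τ,
      (Mem K (Ty.arrow σ τ) G ∨ IsConst K σ τ G) →
      ((∀ x, Mem K σ x → TGt K τ (F x) (G x)) →
        ∀ x, Mem K σ x → TGt K τ (Phi K σ τ F x) (Phi K σ τ G x)) ∧
      ((∀ x, Mem K σ x → TGe K τ (F x) (G x)) →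
        ∀ x, Mem K σ x → TGe K τ (Phi K σ τ F x) (Phi K σ τ G x)) := by
  classical
  obtain ⟨n0σ, amσ, rflσ, trσ, trgσ, trg2σ, geσ, gtσ, gtcσ, cgeσ, cgtσ, s1σ, Bgeσ, Bgtσ⟩ := mega K σ
  obtain ⟨n0τ, amτ, rflτ, trτ, trgτ, trg2τ, geτ, gtτ, gtcτ, cgeτ, cgtτ, s1τ, Bgeτ, Bgtτ⟩ := mega K τ
  -- value of Phi depending on membership of its argument
  have hPhi : ∀ (H : Interp K σ → Interp K τ),
      (Mem K (Ty.arrow σ τ) H → ∀ d, Phi K σ τ H d = addcost K τ 1 (H d)) ∧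
      (¬ Mem K (Ty.arrow σ τ) H → ∀ d, Phi K σ τ H d = addcost K τ (cost K σ d + 1) (H d)) := by
    intro H
    constructor
    · intro h d; simp [Phi, h]
    · intro h d; simp [Phi, h]
  have memFx : ∀ x, Mem K σ x → Mem K τ (F x) := by
    rcases hF with h | h
    · exact h.1
    · exact h.1
  constructor
  · -- Phi F is strongly monotonic
    by_cases hFm : Mem K (Ty.arrow σ τ) F
    · refine ⟨?_, ?_, ?_⟩
      · intro x hx; rw [(hPhi F).1 hFm]; exact amτ 1 _ (memFx x hx)
      · intro x y hx hy hxy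
        rw [(hPhi F).1 hFm, (hPhi F).1 hFm]
        exact gtτ 1 1 _ _ le_rfl (hFm.2.1 x y hx hy hxy)
      · intro x y hx hy hxy
        rw [(hPhi F).1 hFm, (hPhi F).1 hFm]
        exact geτ 1 1 _ _ le_rfl (hFm.2.2 x y hx hy hxy)
    · have hFc : IsConst K σ τ F := hF.resolve_left hFm
      refine ⟨?_, ?_, ?_⟩
      · intro x hx; rw [(hPhi F).2 hFm]; exact amτ _ _ (memFx x hx)
      · intro x y hx hy hxy
        rw [(hPhi F).2 hFm, (hPhi F).2 hFm]
        have hcc : cost K σ y + 1 < cost K σ x + 1 := by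
          have := cgtσ x y hxy; omega
        have heq : F x = F y := hFc.2 x y hx hy
        exact gtcτ _ _ _ _ hcc (heq ▸ rflτ (F x))
      · intro x y hx hy hxy
        rw [(hPhi F).2 hFm, (hPhi F).2 hFm]
        have hcc : cost K σ y + 1 ≤ cost K σ x + 1 := by
          have := cgeσ x y hxy; omega
        have heq : F x = F y := hFc.2 x y hx hy
        exact geτ _ _ _ _ hcc (heq ▸ rflτ (F x))
  · intro G hG
    have memGx : ∀ x, Mem K σ x → Mem K τ (G x) := by
      rcases hG with h | h
      · exact h.1
      · exact h.1
    constructor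
    · -- strict part
      intro h x hx
      by_cases hFm : Mem K (Ty.arrow σ τ) F <;> by_cases hGm : Mem K (Ty.arrow σ τ) G
      · rw [(hPhi F).1 hFm, (hPhi G).1 hGm]
        exact gtτ 1 1 _ _ le_rfl (h x hx)
      · -- hard case: F monotonic, G constant
        have hGc : IsConst K σ τ G := hG.resolve_left hGm
        rw [(hPhi F).1 hFm, (hPhi G).2 hGm]
        have h1 : TGe K τ (F x) (addcost K τ (cost K σ x) (F (nul K σ))) :=
          superadd K σ τ F hFm x hx
        have h2 : TGe K τ (addcost K τ 1 (F x))
            (addcost K τ (1 + cost K σ x) (F (nul K σ))) := by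
          have := geτ 1 1 _ _ le_rfl h1
          rwa [addcost_add] at this
        have h3 : TGt K τ (addcost K τ (1 + cost K σ x) (F (nul K σ)))
            (addcost K τ (cost K σ x + 1) (G x)) := by
          have hGeq : G x = G (nul K σ) := hGc.2 x (nul K σ) hx n0σ
          have := gtτ (1 + cost K σ x) (cost K σ x + 1) _ _ (by omega) (h (nul K σ) n0σ)
          rwa [← hGeq] at this
        exact trgτ _ _ _ h2 h3
      · rw [(hPhi F).2 hFm, (hPhi G).1 hGm]
        exact gtτ _ 1 _ _ (by omega) (h x hx)
      · rw [(hPhi F).2 hFm, (hPhi G).2 hGm]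
        exact gtτ _ _ _ _ le_rfl (h x hx)
    · -- weak part
      intro h x hx
      by_cases hFm : Mem K (Ty.arrow σ τ) F <;> by_cases hGm : Mem K (Ty.arrow σ τ) G
      · rw [(hPhi F).1 hFm, (hPhi G).1 hGm]
        exact geτ 1 1 _ _ le_rfl (h x hx)
      · have hGc : IsConst K σ τ G := hG.resolve_left hGm
        rw [(hPhi F).1 hFm, (hPhi G).2 hGm]
        have h1 : TGe K τ (F x) (addcost K τ (cost K σ x) (F (nul K σ))) :=
          superadd K σ τ F hFm x hx
        have h2 : TGe K τ (addcost K τ 1 (F x))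
            (addcost K τ (1 + cost K σ x) (F (nul K σ))) := by
          have := geτ 1 1 _ _ le_rfl h1
          rwa [addcost_add] at this
        have h3 : TGe K τ (addcost K τ (1 + cost K σ x) (F (nul K σ)))
            (addcost K τ (cost K σ x + 1) (G x)) := by
          have hGeq : G x = G (nul K σ) := hGc.2 x (nul K σ) hx n0σ
          have := geτ (1 + cost K σ x) (cost K σ x + 1) _ _ (by omega) (h (nul K σ) n0σ)
          rwa [← hGeq] at this
        exact trτ _ _ _ h2 h3
      · rw [(hPhi F).2 hFm, (hPhi G).1 hGm]
        exact geτ _ 1 _ _ (by omega) (h x hx)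
      · rw [(hPhi F).2 hFm, (hPhi G).2 hGm]
        exact geτ _ _ _ _ le_rfl (h x hx)
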